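/- Let V be a finite-dimensional vector space over ℚ. Suppose x₀, e₁, …, e_m ∈ V with e₁, …, e_m linearly independent, and x₀′, e₁′, …, e_{m′}′ ∈ V with e₁′, …, e_{m′}′ linearly independent, define the same simple sector, i.e. {x₀ + ∑ᵢ aᵢeᵢ : aᵢ ∈ ℤ≥0} = {x₀′ + ∑ⱼ aⱼe′ⱼ : aⱼ ∈ ℤ≥0}. Then x₀ = x₀′, m = m′, and there is a permutation τ of {1, …, m} with e′ⱼ = e_{τ(j)} for all j; i.e. the data of a simple sector is determined by the underlying set up to a permutation of the generators. -/

import Mathlib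

/-- The simple sector associated to a datum `(x₀; e₁, …, e_m)`:
the set `{x₀ + a₁e₁ + ⋯ + a_m e_m : aᵢ ∈ ℤ, aᵢ ≥ 0}`. -/
def simpleSector {V : Type*} [AddCommGroup V] [Module ℚ V] {m : ℕ}
    (x₀ : V) (e : Fin m → V) : Set V :=
  {y | ∃ a : Fin m → ℕ, y = x₀ + ∑ i, a i • e i}

private lemma coeff_unique {V : Type*} [AddCommGroup V] [Module ℚ V] {m : ℕ} {e : Fin m → V}
    (he : LinearIndependent ℚ e) {a b : Fin m → ℕ}
    (h : ∑ i, a i • e i = ∑ i, b i • e i) : a = b := by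
  have h2 : ∑ i, (((a i : ℚ)) - (b i : ℚ)) • e i = (0 : V) := by
    have h1 : ∑ i, ((a i : ℚ)) • e i = ∑ i, ((b i : ℚ)) • e i := by
      simpa [Nat.cast_smul_eq_nsmul] using h
    simp [sub_smul, Finset.sum_sub_distrib, h1]
  have h3 := Fintype.linearIndependent_iff.mp he _ h2
  funext i
  have h4 := h3 i
  have h5 : (a i : ℚ) = (b i : ℚ) := by linarith [h4, sub_eq_zero.mp h4]
  exact_mod_cast h5

private lemma range_subset_of_same_cone {V : Type*} [AddCommGroup V] [Module ℚ V]
    {m m' : ℕ} {e : Fin m → V} {e' : Fin m' → V}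
    (he : LinearIndependent ℚ e) (he' : LinearIndependent ℚ e')
    (h : ∀ v : V, (∃ a : Fin m → ℕ, v = ∑ i, a i • e i) ↔
        (∃ b : Fin m' → ℕ, v = ∑ j, b j • e' j)) :
    Set.range e' ⊆ Set.range e := by
  rintro _ ⟨j, rfl⟩
  have hj : e' j = ∑ k, (Pi.single j 1 : Fin m' → ℕ) k • e' k := by
    simp [Pi.single_apply]
  obtain ⟨c, hc⟩ := (h (e' j)).mpr ⟨Pi.single j 1, hj⟩
  have hcne : c ≠ 0 := by
    rintro rfl
    exact he'.ne_zero j (by simpa using hc)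
  obtain ⟨i₀, hi₀⟩ := Function.ne_iff.mp hcne
  have hi₀pos : 1 ≤ c i₀ := Nat.one_le_iff_ne_zero.mpr hi₀
  set c' : Fin m → ℕ := Function.update c i₀ (c i₀ - 1) with hc'def
  have hdec : e' j = e i₀ + ∑ i, c' i • e i := by
    rw [hc]
    have h1 : c i₀ • e i₀ = e i₀ + (c i₀ - 1) • e i₀ := by
      conv_lhs => rw [show c i₀ = 1 + (c i₀ - 1) by omega]
      rw [add_smul, one_smul]
    calc ∑ i, c i • e i
        = c i₀ • e i₀ + ∑ i ∈ Finset.univ.erase i₀, c i • e i :=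
          (Finset.add_sum_erase _ _ (Finset.mem_univ i₀)).symm
      _ = e i₀ + ((c i₀ - 1) • e i₀ + ∑ i ∈ Finset.univ.erase i₀, c i • e i) := by
          rw [h1, add_assoc]
      _ = e i₀ + ∑ i, c' i • e i := by
          congr 1
          rw [← Finset.add_sum_erase _ (fun i => c' i • e i) (Finset.mem_univ i₀)]
          congr 1
          · simp [hc'def]
          · exact Finset.sum_congr rfl fun x hx => by
              rw [hc'def, Function.update_of_ne (Finset.ne_of_mem_erase hx)]
  obtain ⟨b, hb⟩ := (h (e i₀)).mp ⟨Pi.single i₀ 1, by simp [Pi.single_apply]⟩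
  obtain ⟨b', hb'⟩ := (h (∑ i, c' i • e i)).mp ⟨c', rfl⟩
  have hsum : ∑ k, (b k + b' k) • e' k = ∑ k, (Pi.single j 1 : Fin m' → ℕ) k • e' k := by
    rw [← hj]
    simp only [add_smul, Finset.sum_add_distrib, ← hb, ← hb']
    rw [hdec]
  have hbb := coeff_unique he' hsum
  have hbne : b ≠ 0 := by
    rintro rfl
    exact he.ne_zero i₀ (by simpa using hb)
  have hble : ∀ l, b l + b' l = (if l = j then 1 else 0) := by
    intro l
    have h3 := congrFun hbb l
    simpa [Pi.single_apply] using h3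
  have hbj : b = Pi.single j 1 := by
    have hbj1 : b j = 1 := by
      have h1 : b j + b' j = 1 := by simpa using hble j
      rcases Nat.le_one_iff_eq_zero_or_eq_one.mp (by omega : b j ≤ 1) with h0 | h1'
      · exfalso
        apply hbne
        funext l
        have h2 := hble l
        by_cases hl : l = j
        · subst hl; simp only [Pi.zero_apply]; exact h0
        · rw [if_neg hl] at h2; simp only [Pi.zero_apply]; omega
      · exact h1'
    funext l
    have h2 := hble l
    by_cases hl : l = j
    · subst hl; simp [Pi.single_apply, hbj1]
    · rw [if_neg hl] at h2; simp only [Pi.single_apply, if_neg hl]; omega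
  rw [hbj] at hb
  rw [← hj] at hb
  exact ⟨i₀, hb⟩

/-- If two simple-sector data `(x₀; e₁, …, e_m)` and `(x₀′; e₁′, …, e_{m′}′)` (with the
`eᵢ`, resp. the `e′ⱼ`, linearly independent) define the same simple sector, then
`x₀ = x₀′`, `m = m′`, and the `e′ⱼ` are a permutation of the `eᵢ`. -/
theorem simpleSector_data_unique
    (V : Type*) [AddCommGroup V] [Module ℚ V] [FiniteDimensional ℚ V]
    (m m' : ℕ) (x₀ x₀' : V) (e : Fin m → V) (e' : Fin m' → V)
    (he : LinearIndependent ℚ e) (he' : LinearIndependent ℚ e')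
    (h : simpleSector x₀ e = simpleSector x₀' e') :
    x₀ = x₀' ∧ m = m' ∧ ∃ τ : Fin m' ≃ Fin m, ∀ j, e' j = e (τ j) := by
  -- a linear functional with f (e i) = 1 for all i
  obtain ⟨f, hf⟩ := LinearMap.exists_extend ((Module.Basis.span he).constr ℚ (fun _ => (1:ℚ)))
  have hfe : ∀ i, f (e i) = 1 := by
    intro i
    have hmem : e i ∈ Submodule.span ℚ (Set.range e) :=
      Submodule.subset_span ⟨i, rfl⟩
    have h1 : f (e i) = ((Module.Basis.span he).constr ℚ (fun _ => (1:ℚ))) ⟨e i, hmem⟩ := by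
      rw [← hf]; rfl
    rw [h1]
    have h2 : (⟨e i, hmem⟩ : Submodule.span ℚ (Set.range e)) = Module.Basis.span he i :=
      (Module.Basis.span_apply he i).symm
    rw [h2, Module.Basis.constr_basis]
  -- f evaluated on sums
  have hfsum : ∀ {k : ℕ} (g : Fin k → V) (a : Fin k → ℕ),
      f (∑ i, a i • g i) = ∑ i, (a i : ℚ) * f (g i) := by
    intro k g a
    rw [map_sum]
    exact Finset.sum_congr rfl fun i _ => by
      rw [map_nsmul, nsmul_eq_mul]
  -- f is bounded below on the sector by f x₀
  have hlow : ∀ y ∈ simpleSector x₀ e, f x₀ ≤ f y := by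
    rintro y ⟨a, rfl⟩
    rw [map_add, hfsum e a]
    have : (0:ℚ) ≤ ∑ i, (a i : ℚ) * f (e i) :=
      Finset.sum_nonneg fun i _ => by rw [hfe i]; positivity
    linarith
  -- f (e' j) ≥ 0
  have hfe' : ∀ j, 0 ≤ f (e' j) := by
    intro j
    by_contra hneg
    push_neg at hneg
    obtain ⟨n, hn⟩ := exists_nat_gt ((f x₀' - f x₀) / (-f (e' j)))
    have hmem : x₀' + ∑ k, (Pi.single j n : Fin m' → ℕ) k • e' k ∈ simpleSector x₀' e' :=
      ⟨Pi.single j n, rfl⟩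
    rw [← h] at hmem
    have h1 := hlow _ hmem
    rw [map_add, hfsum e' (Pi.single j n)] at h1
    have h2 : ∑ k, ((Pi.single j n : Fin m' → ℕ) k : ℚ) * f (e' k) = (n : ℚ) * f (e' j) := by
      rw [Finset.sum_eq_single j]
      · simp
      · intro k _ hk
        simp [Pi.single_eq_of_ne hk]
      · simp
    rw [h2] at h1
    rw [div_lt_iff₀ (by linarith)] at hn
    nlinarith
  -- x₀ = x₀'
  have hx₀'mem : x₀' ∈ simpleSector x₀ e := by
    rw [h]; exact ⟨0, by simp⟩
  have hx₀mem : x₀ ∈ simpleSector x₀' e' := by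
    rw [← h]; exact ⟨0, by simp⟩
  obtain ⟨a, ha⟩ := hx₀'mem
  obtain ⟨b, hb⟩ := hx₀mem
  have hfa : f x₀' = f x₀ + ∑ i, (a i : ℚ) * f (e i) := by
    rw [ha, map_add, hfsum e a]
  have hfb : f x₀ = f x₀' + ∑ j, (b j : ℚ) * f (e' j) := by
    rw [hb, map_add, hfsum e' b]
  have hbsum : (0:ℚ) ≤ ∑ j, (b j : ℚ) * f (e' j) :=
    Finset.sum_nonneg fun j _ => mul_nonneg (by positivity) (hfe' j)
  have hasum : ∑ i, (a i : ℚ) * f (e i) = ∑ i, (a i : ℚ) := by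
    exact Finset.sum_congr rfl fun i _ => by rw [hfe i, mul_one]
  have hazero : ∀ i, (a i : ℚ) = 0 := by
    have hsum0 : ∑ i, (a i : ℚ) ≤ 0 := by
      rw [← hasum]; linarith
    intro i
    have := Finset.sum_nonneg (fun i (_ : i ∈ Finset.univ) => (by positivity : (0:ℚ) ≤ (a i : ℚ)))
    have heq : ∑ i, (a i : ℚ) = 0 := le_antisymm hsum0 this
    have := (Finset.sum_eq_zero_iff_of_nonneg
      (fun i _ => by positivity)).mp heq i (Finset.mem_univ i)
    exact this
  have hx : x₀ = x₀' := by
    rw [ha]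
    have : ∑ i, a i • e i = 0 := by
      apply Finset.sum_eq_zero
      intro i _
      have : a i = 0 := by exact_mod_cast hazero i
      simp [this]
    rw [this, add_zero]
  subst hx
  -- now the translated cones agree
  have hcone : ∀ v : V, (∃ a : Fin m → ℕ, v = ∑ i, a i • e i) ↔
      (∃ b : Fin m' → ℕ, v = ∑ j, b j • e' j) := by
    intro v
    constructor
    · rintro ⟨a, rfl⟩
      have : x₀ + ∑ i, a i • e i ∈ simpleSector x₀ e' := by
        rw [← h]; exact ⟨a, rfl⟩
      obtain ⟨b, hb⟩ := this
      exact ⟨b, by rwa [add_right_inj] at hb⟩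
    · rintro ⟨b, rfl⟩
      have : x₀ + ∑ j, b j • e' j ∈ simpleSector x₀ e := by
        rw [h]; exact ⟨b, rfl⟩
      obtain ⟨a, ha⟩ := this
      exact ⟨a, by rwa [add_right_inj] at ha⟩
  have hsub : Set.range e' ⊆ Set.range e :=
    range_subset_of_same_cone he he' hcone
  have hsub' : Set.range e ⊆ Set.range e' :=
    range_subset_of_same_cone he' he (fun v => (hcone v).symm)
  -- construct the equivalence
  have hg : ∀ j : Fin m', ∃ i : Fin m, e i = e' j := fun j => hsub ⟨j, rfl⟩
  have hg' : ∀ i : Fin m, ∃ j : Fin m', e' j = e i := fun i => hsub' ⟨i, rfl⟩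
  choose g hgspec using hg
  choose g' hg'spec using hg'
  have hleft : ∀ j, g' (g j) = j := by
    intro j
    apply he'.injective
    rw [hg'spec, hgspec]
  have hright : ∀ i, g (g' i) = i := by
    intro i
    apply he.injective
    rw [hgspec, hg'spec]
  let τ : Fin m' ≃ Fin m := ⟨g, g', hleft, hright⟩
  refine ⟨rfl, ?_, τ, fun j => (hgspec j).symm⟩
  simpa using (Fintype.card_congr τ).symm
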